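/- arXiv:1301.7166 — 4 statements merged into one kernel-verified Lean document; each statement's English description precedes it below -/
import Mathlib

section
/- If s(u_L - u_R) = (u_L²/2 - u_R²/2) - (σ_L - σ_R) and s(σ_L - σ_R) = ((u_L + u_R)/2)(σ_L - σ_R), with u_L ≠ u_R, then σ_L = σ_R. (Hence the Volpert product admits no genuine shock waves with a jump in σ for the limiting elastodynamics system.) -/
/-- Volpert's product admits no shock waves with a jump in σ for the limiting
elastodynamics system: the Rankine–Hugoniot relations force σ_L = σ_R. -/
theorem volpert_no_shock (uL uR σL σR s : ℝ) (hu : uL ≠ uR)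
    (h1 : s * (uL - uR) = (uL ^ 2 / 2 - uR ^ 2 / 2) - (σL - σR))
    (h2 : s * (σL - σR) = ((uL + uR) / 2) * (σL - σR)) :
    σL = σR := by
  set a : ℝ := s - (uL + uR) / 2 with ha
  set d : ℝ := σL - σR with hd
  have e2 : a * d = 0 := by rw [ha, hd]; nlinarith [h2]
  have e1 : a * (uL - uR) = -d := by rw [ha, hd]; nlinarith [h1]
  have : d ^ 2 = 0 := by
    have : d ^ 2 = -((a * d) * (uL - uR)) := by rw [mul_comm a d, mul_assoc, e1]; ring
    rw [this, e2]; ring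
  have : d = 0 := by
    have := pow_eq_zero_iff (n := 2) (by norm_num) |>.mp this
    exact this
  rw [hd] at this; linarith
end

section
/- Let φ₁, φ₂ : [0,1] → ℝ be Lipschitz paths with φ₁(0) = u_L, φ₁(1) = u_R, φ₂(0) = σ_L, φ₂(1) = σ_R, u_L ≠ u_R, and k > 0. Then the DLM Rankine-Hugoniot conditions ∫₀¹ (-s + φ₁)φ₁' - φ₂' dt = 0 and ∫₀¹ (-k² φ₁' + (-s + φ₁)φ₂') dt = 0 hold if and only if s = ((u_R²-u_L²)/2 - (σ_R-σ_L))/(u_R-u_L) and ∫₀¹ φ₁(t) φ₂'(t) dt = (σ_R-σ_L)·s + k²(u_R-u_L). -/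
open MeasureTheory Set Filter intervalIntegral
open scoped ENNReal NNReal

lemma ftc_mono_lip {g : ℝ → ℝ} {L : NNReal} (hg : Monotone g) (hL : LipschitzWith L g)
    {a b : ℝ} (hab : a ≤ b) :
    ∫ t in a..b, deriv g t = g b - g a := by
  set G : StieltjesFunction ℝ := ⟨g, hg, fun x => hL.continuous.continuousWithinAt⟩ with hG
  have habs : ∀ x y : ℝ, x ≤ y → g y - g x ≤ (L:ℝ) * (y - x) := by
    intro x y hxy
    have := hL.dist_le_mul y x
    rw [Real.dist_eq, Real.dist_eq] at this
    have h1 : g y - g x ≤ |g y - g x| := le_abs_self _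
    have h2 : |y - x| = y - x := abs_of_nonneg (by linarith)
    rw [h2] at this
    linarith
  have hh : Monotone (fun x => (L:ℝ) * x - g x) := by
    intro x y hxy
    have := habs x y hxy
    simp only
    nlinarith
  set H : StieltjesFunction ℝ :=
    ⟨fun x => (L:ℝ) * x - g x, hh,
      fun x => ((continuous_const.mul continuous_id).sub hL.continuous).continuousWithinAt⟩ with hH
  have hineq : ∀ s : Set ℝ, G.measure s ≤ (G + H).measure s := by
    intro s
    rw [StieltjesFunction.measure_add]
    exact Measure.le_iff'.mp (Measure.le_add_right le_rfl) s
  have hGH : ∀ x y : ℝ, x < y → (G + H).measure (Ioc x y) = ENNReal.ofReal ((L:ℝ) * (y - x)) := by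
    intro x y hxy
    rw [StieltjesFunction.measure_Ioc]
    rw [StieltjesFunction.add_apply, StieltjesFunction.add_apply]
    congr 1
    show g y + ((L:ℝ) * y - g y) - (g x + ((L:ℝ) * x - g x)) = (L:ℝ) * (y - x)
    ring
  have hvol : (G + H).measure = (L : ℝ≥0∞) • (volume : Measure ℝ) := by
    refine MeasureTheory.Measure.ext_of_Ioc _ _ fun x y hxy => ?_
    rw [hGH x y hxy]
    simp only [Measure.smul_apply, Real.volume_Ioc, smul_eq_mul]
    rw [ENNReal.ofReal_mul L.coe_nonneg, ENNReal.ofReal_coe_nnreal]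
  have hAC : G.measure ≪ (volume : Measure ℝ) := by
    refine Measure.AbsolutelyContinuous.mk fun s hs h0 => ?_
    refine le_antisymm ?_ zero_le
    calc G.measure s ≤ (G + H).measure s := hineq s
      _ = (L : ℝ≥0∞) * volume s := by rw [hvol]; rfl
      _ = 0 := by rw [h0, mul_zero]
  have hWD : volume.withDensity (G.measure.rnDeriv volume) = G.measure :=
    Measure.withDensity_rnDeriv_eq _ _ hAC
  have hd := G.ae_hasDerivAt
  have hderiv : deriv g =ᵐ[volume] fun x => (G.measure.rnDeriv volume x).toReal := by
    filter_upwards [hd] with x hx using hx.deriv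
  have h1 : (∫ t in a..b, deriv g t) = ∫ t in Ioc a b, (G.measure.rnDeriv volume t).toReal := by
    rw [intervalIntegral.integral_of_le hab]
    exact integral_congr_ae (ae_restrict_of_ae hderiv)
  rw [h1]
  rw [integral_toReal (Measure.measurable_rnDeriv _ _).aemeasurable
    (ae_restrict_of_ae (Measure.rnDeriv_lt_top _ _))]
  rw [← withDensity_apply _ measurableSet_Ioc, hWD, StieltjesFunction.measure_Ioc]
  exact ENNReal.toReal_ofReal (sub_nonneg.mpr (hg hab))

lemma intInt_deriv_bdd {f : ℝ → ℝ} {K : NNReal} (hf : LipschitzWith K f) (a b : ℝ) :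
    IntervalIntegrable (deriv f) volume a b := by
  refine IntervalIntegrable.mono_fun' (g := fun _ => (K : ℝ)) intervalIntegrable_const
    (measurable_deriv f).aestronglyMeasurable.restrict ?_
  exact Eventually.of_forall fun x => norm_deriv_le_of_lipschitz hf

lemma lipschitzWith_linear (c : NNReal) : LipschitzWith c (fun x : ℝ => (c : ℝ) * x) :=
  LipschitzWith.of_dist_le_mul fun x y => by
    rw [Real.dist_eq, Real.dist_eq, ← mul_sub, abs_mul, abs_of_nonneg c.coe_nonneg]

lemma ftc_lip {f : ℝ → ℝ} {K : NNReal} (hf : LipschitzWith K f) {a b : ℝ} (hab : a ≤ b) :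
    ∫ t in a..b, deriv f t = f b - f a := by
  set g : ℝ → ℝ := fun x => f x + (K : ℝ) * x with hgdef
  have hgl : LipschitzWith (K + K) g := hf.add (lipschitzWith_linear K)
  have hgm : Monotone g := by
    intro x y hxy
    have h1 := hf.dist_le_mul y x
    rw [Real.dist_eq, Real.dist_eq, abs_of_nonneg (by linarith : (0:ℝ) ≤ y - x)] at h1
    simp only [hgdef]
    nlinarith [neg_abs_le (f y - f x)]
  have hdg : ∀ᵐ x : ℝ, deriv g x = deriv f x + (K : ℝ) := by
    filter_upwards [hf.ae_differentiableAt (μ := volume)] with x hx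
    have h1 : HasDerivAt f (deriv f x) x := hx.hasDerivAt
    have h2 : HasDerivAt g (deriv f x + (K : ℝ)) x := by
      exact (h1.add ((hasDerivAt_id x).const_mul (K : ℝ))).congr_deriv (by ring)
    exact h2.deriv
  have h3 : (∫ t in a..b, deriv g t) = ∫ t in a..b, (deriv f t + (K : ℝ)) := by
    refine intervalIntegral.integral_congr_ae ?_
    filter_upwards [hdg] with x hx using fun _ => hx
  have h4 : (∫ t in a..b, (deriv f t + (K : ℝ)))
      = (∫ t in a..b, deriv f t) + (K : ℝ) * (b - a) := by
    rw [intervalIntegral.integral_add (intInt_deriv_bdd hf a b) intervalIntegrable_const,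
      intervalIntegral.integral_const, smul_eq_mul, mul_comm]
  have h5 := ftc_mono_lip hgm hgl hab
  rw [h3, h4] at h5
  simp only [hgdef] at h5
  linarith



open intervalIntegral

/-- DLM Rankine–Hugoniot conditions for the elastodynamics system with
elasticity constant k > 0: the two integral conditions hold iff s is the
shock speed and the path satisfies condition (2.8). -/
theorem DLM_RH_elastodynamics_system
    (uL uR σL σR s k : ℝ) (φ₁ φ₂ : ℝ → ℝ) (K₁ K₂ : NNReal)
    (hLip₁ : LipschitzOnWith K₁ φ₁ (Set.Icc 0 1))
    (hLip₂ : LipschitzOnWith K₂ φ₂ (Set.Icc 0 1))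
    (h₁0 : φ₁ 0 = uL) (h₁1 : φ₁ 1 = uR)
    (h₂0 : φ₂ 0 = σL) (h₂1 : φ₂ 1 = σR)
    (hu : uL ≠ uR) (hk : 0 < k) :
    ((∫ t in (0:ℝ)..1, ((-s + φ₁ t) * deriv φ₁ t - deriv φ₂ t)) = 0 ∧
     (∫ t in (0:ℝ)..1, (-k ^ 2 * deriv φ₁ t + (-s + φ₁ t) * deriv φ₂ t)) = 0)
    ↔ (s = ((uR ^ 2 - uL ^ 2) / 2 - (σR - σL)) / (uR - uL) ∧
       (∫ t in (0:ℝ)..1, φ₁ t * deriv φ₂ t)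
          = (σR - σL) * s + k ^ 2 * (uR - uL)) := by
  obtain ⟨ψ₁, hψ₁L, hψ₁eq⟩ := hLip₁.extend_real
  obtain ⟨ψ₂, hψ₂L, hψ₂eq⟩ := hLip₂.extend_real
  set M : ℝ := |uL| + (K₁ : ℝ) with hM
  have hM0 : 0 ≤ M := by positivity
  have hbound : ∀ t ∈ Icc (0:ℝ) 1, |φ₁ t| ≤ M := by
    intro t ht
    have := hLip₁.dist_le_mul t ht 0 (by constructor <;> norm_num)
    rw [Real.dist_eq, Real.dist_eq, h₁0] at this
    have h2 : |t - 0| ≤ 1 := by rw [sub_zero, abs_of_nonneg ht.1]; exact ht.2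
    have h3 : |φ₁ t| - |uL| ≤ |φ₁ t - uL| := by
      have := abs_sub_abs_le_abs_sub (φ₁ t) uL; linarith
    nlinarith [K₁.coe_nonneg]
  set χ : ℝ → ℝ := fun x => max (-M) (min (ψ₁ x) M) with hχ
  have hχL : LipschitzWith K₁ χ := (hψ₁L.min_const M).const_max (-M)
  have hχeq : EqOn φ₁ χ (Icc 0 1) := by
    intro t ht
    have h1 := hbound t ht
    have h2 := abs_le.mp h1
    simp only [hχ, ← hψ₁eq ht]
    rw [min_eq_left h2.2, max_eq_right h2.1]
  have hχb : ∀ x, |χ x| ≤ M := by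
    intro x
    rw [abs_le]
    constructor
    · exact le_max_left _ _
    · exact max_le (by linarith) (min_le_right _ _)
  -- derivatives agree on the interior
  have hd1 : ∀ t ∈ Ioo (0:ℝ) 1, deriv φ₁ t = deriv χ t := by
    intro t ht
    apply Filter.EventuallyEq.deriv_eq
    filter_upwards [Icc_mem_nhds ht.1 ht.2] with x hx using hχeq hx
  have hd2 : ∀ t ∈ Ioo (0:ℝ) 1, deriv φ₂ t = deriv ψ₂ t := by
    intro t ht
    apply Filter.EventuallyEq.deriv_eq
    filter_upwards [Icc_mem_nhds ht.1 ht.2] with x hx using hψ₂eq hx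
  have hne1 : ∀ᵐ t : ℝ, t ≠ 1 := by
    have : {t : ℝ | ¬ t ≠ 1} = {1} := by ext x; simp
    rw [ae_iff, this]; exact Real.volume_singleton
  have hmem : ∀ t : ℝ, t ≠ 1 → t ∈ Set.uIoc (0:ℝ) 1 → t ∈ Ioo (0:ℝ) 1 := by
    intro t ht hm
    rw [uIoc_of_le zero_le_one] at hm
    exact ⟨hm.1, lt_of_le_of_ne hm.2 ht⟩
  have hsub : Set.uIoc (0:ℝ) 1 ⊆ Icc (0:ℝ) 1 := by
    rw [uIoc_of_le zero_le_one]; exact Ioc_subset_Icc_self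
  have hI1 : (∫ t in (0:ℝ)..1, deriv χ t) = uR - uL := by
    rw [ftc_lip hχL zero_le_one,
      ← hχeq (by norm_num : (1:ℝ) ∈ Icc (0:ℝ) 1),
      ← hχeq (by norm_num : (0:ℝ) ∈ Icc (0:ℝ) 1), h₁0, h₁1]
  have hI2 : (∫ t in (0:ℝ)..1, deriv ψ₂ t) = σR - σL := by
    rw [ftc_lip hψ₂L zero_le_one,
      ← hψ₂eq (by norm_num : (1:ℝ) ∈ Icc (0:ℝ) 1),
      ← hψ₂eq (by norm_num : (0:ℝ) ∈ Icc (0:ℝ) 1), h₂0, h₂1]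
  set sq : ℝ → ℝ := fun x => χ x ^ 2 / 2 with hsq
  have hsqL : LipschitzWith (M.toNNReal * K₁) sq := by
    refine LipschitzWith.of_dist_le_mul fun x y => ?_
    have h1 := hχL.dist_le_mul x y
    simp only [Real.dist_eq] at h1
    rw [Real.dist_eq, Real.dist_eq]
    have h2 : sq x - sq y = (χ x + χ y) / 2 * (χ x - χ y) := by simp only [hsq]; ring
    have h3 : |χ x + χ y| ≤ 2 * M := by
      calc |χ x + χ y| ≤ |χ x| + |χ y| := abs_add_le _ _
        _ ≤ 2 * M := by have := hχb x; have := hχb y; linarith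
    have hcoe : ((M.toNNReal * K₁ : NNReal) : ℝ) = M * K₁ := by
      push_cast [Real.coe_toNNReal _ hM0]
      ring
    rw [hcoe]
    calc |sq x - sq y| = |χ x + χ y| / 2 * |χ x - χ y| := by
          rw [h2, abs_mul, abs_div]; norm_num
      _ ≤ M * K₁ * |x - y| := by
          nlinarith [abs_nonneg (χ x - χ y), abs_nonneg (x - y), K₁.coe_nonneg,
            abs_nonneg (χ x + χ y), mul_le_mul h3 h1 (abs_nonneg (χ x - χ y)) (by linarith : (0:ℝ) ≤ 2 * M)]
  have hsqd : ∀ᵐ x : ℝ, deriv sq x = χ x * deriv χ x := by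
    filter_upwards [hχL.ae_differentiableAt (μ := volume)] with x hx
    have h1 : HasDerivAt χ (deriv χ x) x := hx.hasDerivAt
    have h2 : HasDerivAt sq (χ x * deriv χ x) x := by
      have h3 := (h1.fun_pow 2).div_const 2
      refine h3.congr_deriv ?_
      simp
      ring
    exact h2.deriv
  have hI3 : (∫ t in (0:ℝ)..1, χ t * deriv χ t) = (uR ^ 2 - uL ^ 2) / 2 := by
    have h1 : (∫ t in (0:ℝ)..1, χ t * deriv χ t) = ∫ t in (0:ℝ)..1, deriv sq t := by
      refine intervalIntegral.integral_congr_ae ?_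
      filter_upwards [hsqd] with x hx _ using hx.symm
    rw [h1, ftc_lip hsqL zero_le_one]
    have e1 : χ 1 = uR := by rw [← hχeq (by norm_num : (1:ℝ) ∈ Icc (0:ℝ) 1), h₁1]
    have e0 : χ 0 = uL := by rw [← hχeq (by norm_num : (0:ℝ) ∈ Icc (0:ℝ) 1), h₁0]
    simp only [hsq, e1, e0]
    ring
  have hii1 : IntervalIntegrable (deriv χ) volume 0 1 := intInt_deriv_bdd hχL 0 1
  have hii2 : IntervalIntegrable (deriv ψ₂) volume 0 1 := intInt_deriv_bdd hψ₂L 0 1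
  have hmul : ∀ (g : ℝ → ℝ) (Kg : NNReal), LipschitzWith Kg g →
      IntervalIntegrable (fun t => χ t * deriv g t) volume 0 1 := by
    intro g Kg hg
    refine IntervalIntegrable.mono_fun' (g := fun _ => M * (Kg : ℝ)) intervalIntegrable_const
      ((hχL.continuous.measurable.mul (measurable_deriv g)).aestronglyMeasurable.restrict) ?_
    refine Filter.Eventually.of_forall fun x => ?_
    have h1 := hχb x
    have h2 : ‖deriv g x‖ ≤ (Kg : ℝ) := norm_deriv_le_of_lipschitz hg
    rw [Real.norm_eq_abs] at h2
    show ‖χ x * deriv g x‖ ≤ M * (Kg : ℝ)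
    rw [Real.norm_eq_abs, abs_mul]
    exact mul_le_mul h1 h2 (abs_nonneg _) hM0
  have hii3 := hmul χ K₁ hχL
  have hii4 := hmul ψ₂ K₂ hψ₂L
  have hg1 : (∫ t in (0:ℝ)..1, ((-s + φ₁ t) * deriv φ₁ t - deriv φ₂ t))
      = -s * (uR - uL) + (uR ^ 2 - uL ^ 2) / 2 - (σR - σL) := by
    have hcg : (∫ t in (0:ℝ)..1, ((-s + φ₁ t) * deriv φ₁ t - deriv φ₂ t))
        = ∫ t in (0:ℝ)..1, (-s * deriv χ t + χ t * deriv χ t - deriv ψ₂ t) := by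
      refine intervalIntegral.integral_congr_ae ?_
      filter_upwards [hne1] with t ht hm
      rw [hd1 t (hmem t ht hm), hd2 t (hmem t ht hm), hχeq (hsub hm)]
      ring
    rw [hcg, intervalIntegral.integral_sub ((hii1.const_mul (-s)).add hii3) hii2,
      intervalIntegral.integral_add (hii1.const_mul (-s)) hii3,
      intervalIntegral.integral_const_mul, hI1, hI2, hI3]
  have hg2 : (∫ t in (0:ℝ)..1, (-k ^ 2 * deriv φ₁ t + (-s + φ₁ t) * deriv φ₂ t))
      = -k ^ 2 * (uR - uL) + (-s * (σR - σL)
          + ∫ t in (0:ℝ)..1, χ t * deriv ψ₂ t) := by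
    have hcg : (∫ t in (0:ℝ)..1, (-k ^ 2 * deriv φ₁ t + (-s + φ₁ t) * deriv φ₂ t))
        = ∫ t in (0:ℝ)..1, (-k ^ 2 * deriv χ t + (-s * deriv ψ₂ t + χ t * deriv ψ₂ t)) := by
      refine intervalIntegral.integral_congr_ae ?_
      filter_upwards [hne1] with t ht hm
      rw [hd1 t (hmem t ht hm), hd2 t (hmem t ht hm), hχeq (hsub hm)]
      ring
    rw [hcg, intervalIntegral.integral_add (hii1.const_mul (-k ^ 2))
        ((hii2.const_mul (-s)).add hii4),
      intervalIntegral.integral_add (hii2.const_mul (-s)) hii4,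
      intervalIntegral.integral_const_mul, intervalIntegral.integral_const_mul, hI1, hI2]
  have hg3 : (∫ t in (0:ℝ)..1, φ₁ t * deriv φ₂ t)
      = ∫ t in (0:ℝ)..1, χ t * deriv ψ₂ t := by
    refine intervalIntegral.integral_congr_ae ?_
    filter_upwards [hne1] with t ht hm
    rw [hd2 t (hmem t ht hm), hχeq (hsub hm)]
  rw [hg1, hg2, hg3]
  have hd : uR - uL ≠ 0 := sub_ne_zero.mpr (Ne.symm hu)
  constructor
  · rintro ⟨h1, h2⟩
    refine ⟨by rw [eq_div_iff hd]; linarith, by linarith⟩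
  · rintro ⟨h1, h2⟩
    have h1' : s * (uR - uL) = (uR ^ 2 - uL ^ 2) / 2 - (σR - σL) := by
      rw [h1, div_mul_cancel₀ _ hd]
    exact ⟨by linarith, by linarith⟩
end

section
/- With φ₁ piecewise linear as: φ₁(t) = u_L + 2t(u_R - u_L) on [0,1/2], φ₁(t) = u_R on [1/2,1], and φ₂(t) = σ_L + t(σ_R - σ_L), the condition ∫₀¹ φ₁ φ₂' dt = [σ]·([u²/2]-[σ])/[u] + k²[u] (where [w] = w_R - w_L, u_L ≠ u_R) holds if and only if [σ] satisfies 4[σ]² + (u_R - u_L)²[σ] - 4k²(u_R - u_L)² = 0. -/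
open intervalIntegral

/-- For the DLM path (2.1), condition (2.8) for the elastodynamics system
with constant k holds iff the jump [σ] = σ_R - σ_L satisfies the quadratic
4[σ]² + (u_R - u_L)²[σ] - 4k²(u_R - u_L)² = 0. -/
theorem path_phi_condition_iff_quadratic
    (uL uR σL σR k : ℝ) (hu : uL ≠ uR)
    (φ₁ φ₂ : ℝ → ℝ)
    (hφ₁ : ∀ t ∈ Set.Icc (0:ℝ) (1/2), φ₁ t = uL + 2 * t * (uR - uL))
    (hφ₁' : ∀ t ∈ Set.Icc (1/2:ℝ) 1, φ₁ t = uR)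
    (hφ₂ : ∀ t : ℝ, φ₂ t = σL + t * (σR - σL)) :
    ((∫ t in (0:ℝ)..1, φ₁ t * deriv φ₂ t)
        = (σR - σL) * (((uR ^ 2 - uL ^ 2) / 2 - (σR - σL)) / (uR - uL))
            + k ^ 2 * (uR - uL))
    ↔ 4 * (σR - σL) ^ 2 + (uR - uL) ^ 2 * (σR - σL)
        - 4 * k ^ 2 * (uR - uL) ^ 2 = 0 := by
  have hΔ : uR - uL ≠ 0 := sub_ne_zero.mpr (Ne.symm hu)
  have hφ₂eq : φ₂ = fun t => σL + t * (σR - σL) := funext hφ₂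
  have hderiv : ∀ t : ℝ, deriv φ₂ t = σR - σL := by
    intro t
    rw [hφ₂eq]
    have h : HasDerivAt (fun t : ℝ => σL + t * (σR - σL)) (σR - σL) t := by
      simpa using ((hasDerivAt_id t).mul_const (σR - σL)).const_add σL
    exact h.deriv
  have key : (∫ t in (0:ℝ)..1, φ₁ t * deriv φ₂ t)
      = (uL / 2 + (uR - uL) / 4 + uR / 2) * (σR - σL) := by
    have hsplit : (∫ t in (0:ℝ)..1, φ₁ t * deriv φ₂ t)
        = (∫ t in (0:ℝ)..(1/2), φ₁ t * (σR - σL))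
          + ∫ t in (1/2:ℝ)..1, φ₁ t * (σR - σL) := by
      simp_rw [hderiv]
      rw [intervalIntegral.integral_add_adjacent_intervals]
      · have : Set.EqOn (fun t => φ₁ t * (σR - σL))
            (fun t => (uL + 2 * t * (uR - uL)) * (σR - σL)) (Set.uIcc (0:ℝ) (1/2)) := by
          intro t ht
          rw [Set.uIcc_of_le (by norm_num)] at ht
          simp [hφ₁ t ht]
        exact (Continuous.intervalIntegrable (by continuity) 0 (1/2)).congr
          (fun t ht => (this (Set.Ioc_subset_Icc_self ht)).symm)
      · have : Set.EqOn (fun t => φ₁ t * (σR - σL))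
            (fun _ => uR * (σR - σL)) (Set.uIcc (1/2:ℝ) 1) := by
          intro t ht
          rw [Set.uIcc_of_le (by norm_num)] at ht
          simp [hφ₁' t ht]
        exact (_root_.intervalIntegrable_const (c := uR * (σR - σL))).congr
          (fun t ht => (this (Set.Ioc_subset_Icc_self ht)).symm)
    have h1 : (∫ t in (0:ℝ)..(1/2), φ₁ t * (σR - σL))
        = (uL / 2 + (uR - uL) / 4) * (σR - σL) := by
      have hc : (∫ t in (0:ℝ)..(1/2), φ₁ t * (σR - σL))
          = ∫ t in (0:ℝ)..(1/2), (uL + 2 * t * (uR - uL)) * (σR - σL) := by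
        apply intervalIntegral.integral_congr
        intro t ht
        rw [Set.uIcc_of_le (by norm_num)] at ht
        simp [hφ₁ t ht]
      rw [hc]
      have hF : ∀ t ∈ Set.uIcc (0:ℝ) (1/2),
          HasDerivAt (fun t : ℝ => (uL * t + t ^ 2 * (uR - uL)) * (σR - σL))
            ((uL + 2 * t * (uR - uL)) * (σR - σL)) t := by
        intro t _
        have h1 : HasDerivAt (fun t : ℝ => uL * t + t ^ 2 * (uR - uL))
            (uL + 2 * t * (uR - uL)) t := by
          have := ((hasDerivAt_id t).const_mul uL).add
            ((hasDerivAt_pow 2 t).mul_const (uR - uL))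
          simpa [Pi.add_def] using this
        exact h1.mul_const _
      rw [intervalIntegral.integral_eq_sub_of_hasDerivAt hF
        (Continuous.intervalIntegrable (by continuity) _ _)]
      ring
    have h2 : (∫ t in (1/2:ℝ)..1, φ₁ t * (σR - σL)) = (uR / 2) * (σR - σL) := by
      have hc : (∫ t in (1/2:ℝ)..1, φ₁ t * (σR - σL))
          = ∫ t in (1/2:ℝ)..1, uR * (σR - σL) := by
        apply intervalIntegral.integral_congr
        intro t ht
        rw [Set.uIcc_of_le (by norm_num)] at ht
        simp [hφ₁' t ht]
      rw [hc, intervalIntegral.integral_const]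
      simp; ring
    rw [hsplit, h1, h2]; ring
  rw [key, ← sub_eq_zero]
  have hid : ((uL / 2 + (uR - uL) / 4 + uR / 2) * (σR - σL)
        - ((σR - σL) * (((uR ^ 2 - uL ^ 2) / 2 - (σR - σL)) / (uR - uL))
            + k ^ 2 * (uR - uL))) * (4 * (uR - uL))
      = 4 * (σR - σL) ^ 2 + (uR - uL) ^ 2 * (σR - σL)
        - 4 * k ^ 2 * (uR - uL) ^ 2 := by
    field_simp
    ring
  rw [← hid, mul_eq_zero]
  simp [hΔ]
end

section
/- Define φ̃₁(t) = u_L + 2t(u_R - u_L) on [0,1/2], φ̃₁(t) = u_R on [1/2,1]; φ̃₂(t) = σ_L on [0,1/2], φ̃₂(t) = σ_L + (2t-1)(σ_R - σ_L) on [1/2,1]. If u_R ≠ u_L and σ_R - σ_L = -(1/2)(u_R - u_L)², then ∫₀¹ φ̃₁(t) φ̃₂'(t) dt = (σ_R - σ_L)·((u_R²-u_L²)/2 - (σ_R-σ_L))/(u_R-u_L). -/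
open intervalIntegral MeasureTheory

/-- The DLM path (2.2) gives a shock-wave solution for the limiting system:
if (u_R, σ_R) lies on the shock curve S₁ : σ = σ_L - (1/2)(u - u_L)², then
condition (2.5) is satisfied. -/
theorem path_phi_tilde_shock_curve_limiting
    (uL uR σL σR : ℝ) (hu : uR ≠ uL)
    (hS : σR - σL = -(1 / 2) * (uR - uL) ^ 2)
    (φ₁ φ₂ : ℝ → ℝ)
    (hφ₁ : ∀ t ∈ Set.Icc (0:ℝ) (1/2), φ₁ t = uL + 2 * t * (uR - uL))
    (hφ₁' : ∀ t ∈ Set.Icc (1/2:ℝ) 1, φ₁ t = uR)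
    (hφ₂ : ∀ t ∈ Set.Icc (0:ℝ) (1/2), φ₂ t = σL)
    (hφ₂' : ∀ t ∈ Set.Icc (1/2:ℝ) 1, φ₂ t = σL + (2 * t - 1) * (σR - σL)) :
    (∫ t in (0:ℝ)..1, φ₁ t * deriv φ₂ t)
      = (σR - σL) * (((uR ^ 2 - uL ^ 2) / 2 - (σR - σL)) / (uR - uL)) := by
  set f : ℝ → ℝ := fun t => φ₁ t * deriv φ₂ t with hf
  have key1 : ∀ t ∈ Set.Ioo (0:ℝ) (1/2), f t = 0 := by
    intro t ht
    have hnhds : Set.Ioo (0:ℝ) (1/2) ∈ nhds t := isOpen_Ioo.mem_nhds ht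
    have heq : φ₂ =ᶠ[nhds t] fun _ => σL :=
      Filter.eventuallyEq_of_mem hnhds fun x hx => hφ₂ x (Set.Ioo_subset_Icc_self hx)
    simp [hf, heq.deriv_eq]
  have key2 : ∀ t ∈ Set.Ioo (1/2:ℝ) 1, f t = uR * (2 * (σR - σL)) := by
    intro t ht
    have hnhds : Set.Ioo (1/2:ℝ) 1 ∈ nhds t := isOpen_Ioo.mem_nhds ht
    have heq : φ₂ =ᶠ[nhds t] fun x => σL + (2 * x - 1) * (σR - σL) :=
      Filter.eventuallyEq_of_mem hnhds fun x hx => hφ₂' x (Set.Ioo_subset_Icc_self hx)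
    have hder : HasDerivAt (fun x : ℝ => σL + (2 * x - 1) * (σR - σL)) (2 * (σR - σL)) t := by
      have h := (((hasDerivAt_id t).const_mul 2).sub_const 1).mul_const (σR - σL) |>.const_add σL
      simpa using h
    show φ₁ t * deriv φ₂ t = _
    rw [heq.deriv_eq, hder.deriv, hφ₁' t (Set.Ioo_subset_Icc_self ht)]
  have hne : ∀ᵐ x : ℝ, x ∉ ({(1/2:ℝ), 1} : Set ℝ) := by
    exact (MeasureTheory.measure_eq_zero_iff_ae_notMem (μ := volume)).mp
      (((Set.finite_singleton _).insert _).measure_zero volume)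
  have hae1 : ∀ᵐ x : ℝ, x ∈ Set.uIoc (0:ℝ) (1/2) → f x = (fun _ => (0:ℝ)) x := by
    filter_upwards [hne] with x hx hmem
    rw [Set.uIoc_of_le (by norm_num)] at hmem
    have hx12 : x ≠ (1/2:ℝ) := fun h => hx (by simp [h])
    exact key1 x ⟨hmem.1, lt_of_le_of_ne hmem.2 hx12⟩
  have hae2 : ∀ᵐ x : ℝ, x ∈ Set.uIoc (1/2:ℝ) 1 → f x = (fun _ => uR * (2 * (σR - σL))) x := by
    filter_upwards [hne] with x hx hmem
    rw [Set.uIoc_of_le (by norm_num)] at hmem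
    have hx1 : x ≠ (1:ℝ) := fun h => hx (by simp [h])
    exact key2 x ⟨hmem.1, lt_of_le_of_ne hmem.2 hx1⟩
  have hint1 : IntervalIntegrable f volume 0 (1/2) := by
    rw [intervalIntegrable_iff]
    exact ((integrableOn_const_iff (by simp)).mpr (Or.inr (by rw [Set.uIoc_of_le (by norm_num)]; exact measure_Ioc_lt_top))).congr
      ((ae_restrict_iff' measurableSet_uIoc).mpr (hae1.mono fun x h hx => (h hx).symm))
  have hint2 : IntervalIntegrable f volume (1/2) 1 := by
    rw [intervalIntegrable_iff]
    exact ((integrableOn_const_iff enorm_ne_top).mpr (Or.inr (by rw [Set.uIoc_of_le (by norm_num)]; exact measure_Ioc_lt_top))).congr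
      ((ae_restrict_iff' measurableSet_uIoc).mpr (hae2.mono fun x h hx => (h hx).symm))
  have hsplit : (∫ t in (0:ℝ)..1, f t)
      = (∫ t in (0:ℝ)..(1/2), f t) + ∫ t in (1/2:ℝ)..1, f t :=
    (intervalIntegral.integral_add_adjacent_intervals hint1 hint2).symm
  have h1 : (∫ t in (0:ℝ)..(1/2), f t) = 0 := by
    rw [intervalIntegral.integral_congr_ae hae1]; simp
  have h2 : (∫ t in (1/2:ℝ)..1, f t) = uR * (σR - σL) := by
    rw [intervalIntegral.integral_congr_ae hae2, intervalIntegral.integral_const,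
      smul_eq_mul]
    ring
  rw [hsplit, h1, h2]
  have hsub : uR - uL ≠ 0 := sub_ne_zero.mpr hu
  have hkey : (uR ^ 2 - uL ^ 2) / 2 - (σR - σL) = uR * (uR - uL) := by
    linear_combination -hS
  rw [hkey, mul_div_cancel_right₀ _ hsub]
  ring
end
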